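/- Let k, r be positive integers with r ≥ 2 and gcd(k+1, r-1) = 1, and set β = -(r-1)/(k+1). If λ is a (k,r,n)-admissible partition, then for all 1 ≤ i < j ≤ n, (j-i)·β + λ_i - λ_j ≠ 0. -/
import Mathlib

private lemma lam_mono (lam : ℕ → ℕ) (hmono : ∀ i, 1 ≤ i → lam (i + 1) ≤ lam i)
    (a b : ℕ) (ha : 1 ≤ a) (hab : a ≤ b) : lam b ≤ lam a := by
  induction b with
  | zero => omega
  | succ b ih =>
    rcases Nat.lt_or_ge a (b+1) with h | h
    · exact le_trans (hmono b (by omega)) (ih (by omega))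
    · have : a = b + 1 := by omega
      simp [this]

private lemma lam_chain (lam : ℕ → ℕ) (k r n : ℕ)
    (hadm : ∀ i, 1 ≤ i → i + k ≤ n → lam (i + k) + r ≤ lam i)
    (i : ℕ) (hi : 1 ≤ i) :
    ∀ m, i + m * k ≤ n → lam (i + m * k) + m * r ≤ lam i := by
  intro m
  induction m with
  | zero => simp
  | succ m ih =>
    intro hle
    have key : i + (m + 1) * k = i + m * k + k := by ring
    rw [key] at hle ⊢
    have h1 : lam (i + m * k + k) + r ≤ lam (i + m * k) :=
      hadm (i + m * k) (by omega) hle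
    have h2 := ih (by omega)
    have keyr : (m + 1) * r = m * r + r := by ring
    rw [keyr]
    omega

/-- For β = -(r-1)/(k+1) with gcd(k+1,r-1)=1, r ≥ 2, and λ a
(k,r,n)-admissible partition, (j-i)·β + λ_i - λ_j ≠ 0 for all 1 ≤ i < j ≤ n. -/
theorem admissible_denominator_nonzero (k r n : ℕ) (hk : 1 ≤ k) (hr : 2 ≤ r)
    (hcop : Nat.Coprime (k + 1) (r - 1))
    (β : ℚ) (hβ : β = -((r : ℚ) - 1) / ((k : ℚ) + 1))
    (lam : ℕ → ℕ)
    (hmono : ∀ i, 1 ≤ i → lam (i + 1) ≤ lam i)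
    (hadm : ∀ i, 1 ≤ i → i + k ≤ n → lam (i + k) + r ≤ lam i)
    (i j : ℕ) (hi : 1 ≤ i) (hij : i < j) (hjn : j ≤ n) :
    ((j : ℚ) - (i : ℚ)) * β + (lam i : ℚ) - (lam j : ℚ) ≠ 0 := by
  intro hE
  have hk0 : ((k : ℚ) + 1) ≠ 0 := by positivity
  rw [hβ] at hE
  have hQ : ((j : ℚ) - i) * ((r : ℚ) - 1) = ((lam i : ℚ) - lam j) * ((k : ℚ) + 1) := by
    field_simp at hE
    linarith
  have hZ : ((j : ℤ) - i) * ((r : ℤ) - 1) = ((lam i : ℤ) - lam j) * ((k : ℤ) + 1) := by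
    exact_mod_cast hQ
  have hcopZ : IsCoprime ((k : ℤ) + 1) ((r : ℤ) - 1) := by
    rw [Int.isCoprime_iff_gcd_eq_one]
    have h1 : ((k : ℤ) + 1) = ((k + 1 : ℕ) : ℤ) := by push_cast; ring
    have h2 : ((r : ℤ) - 1) = ((r - 1 : ℕ) : ℤ) := by
      have : (1:ℕ) ≤ r := by omega
      push_cast [this]; ring
    rw [h1, h2, Int.gcd_natCast_natCast]
    exact hcop
  have hdvd : ((k : ℤ) + 1) ∣ ((j : ℤ) - i) := by
    apply hcopZ.dvd_of_dvd_mul_right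
    exact ⟨(lam i : ℤ) - lam j, by rw [hZ]; ring⟩
  obtain ⟨m, hm⟩ := hdvd
  have hmpos : 0 < m := by nlinarith [hm, Int.ofNat_le.mpr (le_of_lt hij)]
  have hd : m * ((r : ℤ) - 1) = (lam i : ℤ) - lam j := by
    have hk0' : ((k : ℤ) + 1) ≠ 0 := by positivity
    have : ((k : ℤ) + 1) * (m * ((r : ℤ) - 1)) = ((k : ℤ) + 1) * ((lam i : ℤ) - lam j) := by
      rw [hm] at hZ; ring_nf; ring_nf at hZ; linarith
    exact mul_left_cancel₀ hk0' this
  set M := m.toNat with hM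
  have hmM : m = (M : ℤ) := by omega
  have hM1 : 1 ≤ M := by omega
  have hj : j = i + M * (k + 1) := by
    have : (j : ℤ) = i + M * (k + 1) := by rw [← hmM]; linarith [hm]
    exact_mod_cast this
  have hle : i + M * k ≤ n := by nlinarith
  have hchain := lam_chain lam k r n hadm i hi M hle
  have hmono' : lam j ≤ lam (i + M * k) :=
    lam_mono lam hmono (i + M * k) j (by omega) (by rw [hj]; nlinarith)
  -- so lam i ≥ lam j + M * r
  have hbig : lam j + M * r ≤ lam i := by omega
  -- but lam i - lam j = M * (r - 1)
  have hdN : (lam i : ℤ) - lam j = M * r - M := by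
    rw [← hd, hmM]; ring
  have : (lam j : ℤ) + M * r ≤ lam i := by exact_mod_cast hbig
  omega
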